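/- The P-valid plane tree T₀ produced by the greedy algorithm admits no valid local move of type 2: there is no pair of adjacent edges e(i,j') and e(j,i') of T₀ with i < j < i' < j' such that p_i and p_j are equal letters (so replacing these edges by e(i,j) and e(i',j') would yield another P-valid plane tree). -/

import Mathlib

/-!
Model: a plane tree with n edges is encoded as a non-crossing perfect matching
on the 2n half-edge positions 0,…,2n-1 (0-indexed); a matched pair (i,j) with
i < j is the edge e(i,j) with left half-edge i and right half-edge j.
-/

/-- `M` is a perfect matching on positions `0,…,2n-1`. -/
def IsMatching (n : ℕ) (M : Finset (ℕ × ℕ)) : Prop :=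
  (∀ p ∈ M, p.1 < p.2 ∧ p.2 < 2 * n) ∧
  (∀ k, k < 2 * n → ∃! p, p ∈ M ∧ (p.1 = k ∨ p.2 = k))

/-- No two matched pairs cross. -/
def NonCrossing (M : Finset (ℕ × ℕ)) : Prop :=
  ∀ p ∈ M, ∀ q ∈ M, ¬ (p.1 < q.1 ∧ q.1 < p.2 ∧ p.2 < q.2)

/-- A plane tree on `n` edges: a non-crossing perfect matching on `0,…,2n-1`. -/
def IsPlaneTree (n : ℕ) (M : Finset (ℕ × ℕ)) : Prop :=
  IsMatching n M ∧ NonCrossing M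

/-- The plane tree `M` is valid for the word `P` (with complementation `comp`):
every matched pair consists of complementary letters. -/
def IsValid {A : Type*} (P : ℕ → A) (comp : A → A) (M : Finset (ℕ × ℕ)) : Prop :=
  ∀ p ∈ M, P p.2 = comp (P p.1)

/-- One pass of the greedy algorithm over positions `0,…,N-1`:
state is (stack of currently unmatched positions, most recent first;
list of matched pairs `(j,i)` with `j < i`). At each position `i`, if the most
recent unmatched position `j` carries a complementary letter, match `(j,i)`;
otherwise leave `i` unmatched. -/
def greedy {A : Type*} [DecidableEq A] (P : ℕ → A) (comp : A → A) :
    ℕ → List ℕ × List (ℕ × ℕ)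
  | 0 => ([], [])
  | (i+1) =>
    let s := greedy P comp i
    match s.1 with
    | [] => ([i], s.2)
    | j :: rest =>
      if P i = comp (P j) then (rest, (j, i) :: s.2)
      else (i :: j :: rest, s.2)

/-- The partial matching produced by the greedy algorithm on a word of length `2n`. -/
def greedyMatching {A : Type*} [DecidableEq A] (P : ℕ → A) (comp : A → A) (n : ℕ) :
    Finset (ℕ × ℕ) :=
  ((greedy P comp (2 * n)).2).toFinset

/-- A local move of type 2: two nested *adjacent* edges `e(i,j')`, `e(j,i')`
with `i < j < i' < j'` (adjacency: no edge lies strictly between them, i.e. no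
edge `(a,b)` with `i < a < j` and `i' < b < j'`) are replaced by `e(i,j)` and
`e(i',j')`. -/
def Type2Move (M M' : Finset (ℕ × ℕ)) : Prop :=
  ∃ i j i' j', i < j ∧ j < i' ∧ i' < j' ∧
    (i, j') ∈ M ∧ (j, i') ∈ M ∧
    (¬ ∃ q ∈ M, i < q.1 ∧ q.1 < j ∧ i' < q.2 ∧ q.2 < j') ∧
    M' = insert (i, j) (insert (i', j') ((M.erase (i, j')).erase (j, i')))

/-- A valid local move of type 2: a type 2 move whose initial and resulting
plane trees are both `P`-valid. -/
def ValidType2Move {A : Type*} (P : ℕ → A) (comp : A → A)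
    (M M' : Finset (ℕ × ℕ)) : Prop :=
  Type2Move M M' ∧ IsValid P comp M ∧ IsValid P comp M'

section GreedyAux

variable {A : Type*} [DecidableEq A] (P : ℕ → A) (comp : A → A)

lemma greedy_cases (t : ℕ) :
    ((greedy P comp t).1 = [] ∧ greedy P comp (t+1) = ([t], (greedy P comp t).2)) ∨
    (∃ x rest, (greedy P comp t).1 = x :: rest ∧ P t = comp (P x) ∧
      greedy P comp (t+1) = (rest, (x,t) :: (greedy P comp t).2)) ∨
    (∃ x rest, (greedy P comp t).1 = x :: rest ∧ ¬ (P t = comp (P x)) ∧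
      greedy P comp (t+1) = (t :: x :: rest, (greedy P comp t).2)) := by
  rcases h : (greedy P comp t).1 with _ | ⟨x, rest⟩
  · left; exact ⟨rfl, by simp [greedy, h]⟩
  · by_cases hc : P t = comp (P x)
    · right; left; exact ⟨x, rest, rfl, hc, by simp [greedy, h, hc]⟩
    · right; right; exact ⟨x, rest, rfl, hc, by simp [greedy, h, hc]⟩

lemma stack_lt : ∀ t, ∀ a ∈ (greedy P comp t).1, a < t := by
  intro t
  induction t with
  | zero => simp [greedy]
  | succ t ih =>
    rcases greedy_cases P comp t with ⟨h1, h2⟩ | ⟨x, rest, h1, hc, h2⟩ | ⟨x, rest, h1, hc, h2⟩ <;>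
      rw [h2] <;> intro a ha <;> simp at ha
    · omega
    · have := ih a (by rw [h1]; exact List.mem_cons_of_mem _ ha); omega
    · rcases ha with rfl | ha
      · omega
      · have := ih a (by rw [h1]; simpa using ha); omega

lemma stack_sorted : ∀ t, ((greedy P comp t).1).Pairwise (· > ·) := by
  intro t
  induction t with
  | zero => simp [greedy]
  | succ t ih =>
    rcases greedy_cases P comp t with ⟨h1, h2⟩ | ⟨x, rest, h1, hc, h2⟩ | ⟨x, rest, h1, hc, h2⟩ <;>
      rw [h2]
    · simp
    · rw [h1] at ih; exact ih.of_cons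
    · rw [h1] at ih
      rw [List.pairwise_cons]
      exact ⟨fun b hb => stack_lt P comp t b (by rw [h1]; exact hb), ih⟩

lemma pairs_mono {t t' : ℕ} (h : t ≤ t') {p : ℕ × ℕ}
    (hp : p ∈ (greedy P comp t).2) : p ∈ (greedy P comp t').2 := by
  induction t' , h using Nat.le_induction with
  | base => exact hp
  | succ t' h ih =>
    rcases greedy_cases P comp t' with ⟨h1, h2⟩ | ⟨x, rest, h1, hc, h2⟩ | ⟨x, rest, h1, hc, h2⟩ <;>
      rw [h2]
    · exact ih
    · exact List.mem_cons_of_mem _ ih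
    · exact ih

lemma pair_mem : ∀ t a b, (a, b) ∈ (greedy P comp t).2 →
    b < t ∧ ∃ rest, (greedy P comp b).1 = a :: rest ∧ P b = comp (P a) ∧
      greedy P comp (b+1) = (rest, (a,b) :: (greedy P comp b).2) := by
  intro t
  induction t with
  | zero => simp [greedy]
  | succ t ih =>
    intro a b hab
    rcases greedy_cases P comp t with ⟨h1, h2⟩ | ⟨x, rest, h1, hc, h2⟩ | ⟨x, rest, h1, hc, h2⟩ <;>
      rw [h2] at hab
    · have := ih a b hab; exact ⟨by omega, this.2⟩
    · rcases List.mem_cons.1 hab with h | h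
      · obtain ⟨rfl, rfl⟩ := Prod.mk.injEq .. ▸ (Prod.ext_iff.1 h)
        exact ⟨Nat.lt_succ_self _, rest, h1, hc, h2⟩
      · have := ih a b h; exact ⟨by omega, this.2⟩
    · have := ih a b hab; exact ⟨by omega, this.2⟩

lemma mem_stack_succ {t a : ℕ} (h : a ∈ (greedy P comp (t+1)).1) :
    a = t ∨ a ∈ (greedy P comp t).1 := by
  rcases greedy_cases P comp t with ⟨h1, h2⟩ | ⟨x, rest, h1, hc, h2⟩ | ⟨x, rest, h1, hc, h2⟩ <;>
    rw [h2] at h <;> simp at h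
  · exact Or.inl h
  · exact Or.inr (by rw [h1]; exact List.mem_cons_of_mem _ h)
  · rcases h with rfl | h
    · exact Or.inl rfl
    · exact Or.inr (by rw [h1]; simpa using h)

lemma stack_persist_back : ∀ t, ∀ {a t' : ℕ}, a ∈ (greedy P comp t).1 →
    t' ≤ t → a < t' → a ∈ (greedy P comp t').1 := by
  intro t
  induction t with
  | zero => intro a t' h; simp [greedy] at h
  | succ t ih =>
    intro a t' h ht hat
    rcases Nat.eq_or_lt_of_le ht with rfl | ht'
    · exact h
    · rcases mem_stack_succ P comp h with rfl | h
      · omega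
      · exact ih h (by omega) hat

lemma suffix_evolve {x : ℕ} {rs : List ℕ} : ∀ {t t' : ℕ}, t ≤ t' →
    (x :: rs) <:+ (greedy P comp t).1 →
    (x :: rs) <:+ (greedy P comp t').1 ∨
      ∃ b, t ≤ b ∧ b < t' ∧ (x, b) ∈ (greedy P comp (b+1)).2 := by
  intro t t' h hsuf
  induction t', h using Nat.le_induction with
  | base => exact Or.inl hsuf
  | succ t' h ih =>
    rcases ih with hs | ⟨b, hb1, hb2, hb3⟩
    · rcases greedy_cases P comp t' with ⟨h1, h2⟩ | ⟨y, rest, h1, hc, h2⟩ | ⟨y, rest, h1, hc, h2⟩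
      · rw [h1] at hs; have := hs.length_le; simp at this
      · rw [h1] at hs
        rcases List.suffix_cons_iff.1 hs with heq | hs'
        · have hxy : x = y := by injection heq
          right
          exact ⟨t', h, Nat.lt_succ_self _, by rw [h2]; subst hxy; exact List.mem_cons_self⟩
        · left; rw [h2]; exact hs'
      · left; rw [h2]
        exact hs.trans (by rw [h1]; exact (List.suffix_cons _ _))
    · exact Or.inr ⟨b, hb1, by omega, hb3⟩

end GreedyAux

/-- The greedy tree `T₀` admits no valid local move of type 2. -/
theorem greedy_tree_no_valid_type2_move {A : Type*} [DecidableEq A]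
    (comp : A → A) (hinv : Function.Involutive comp) (hff : ∀ a, comp a ≠ a)
    (n : ℕ) (P : ℕ → A)
    (hex : ∃ M, IsPlaneTree n M ∧ IsValid P comp M) :
    ¬ ∃ M', ValidType2Move P comp (greedyMatching P comp n) M' := by
  rintro ⟨M', ⟨i, j, i', j', hij, hji', hi'j', hij'M, hji'M, hadj, hM'⟩, hvalM, hvalM'⟩
  -- membership in greedy pair list
  have hij'L : (i, j') ∈ (greedy P comp (2*n)).2 := by
    simpa [greedyMatching] using hij'M
  have hji'L : (j, i') ∈ (greedy P comp (2*n)).2 := by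
    simpa [greedyMatching] using hji'M
  -- validity of new edge (i,j)
  have hPji : P j = comp (P i) := by
    have := hvalM' (i, j) (by rw [hM']; exact Finset.mem_insert_self _ _)
    simpa using this
  obtain ⟨hj'2n, rest2, hSj', -, -⟩ := pair_mem P comp _ i j' hij'L
  obtain ⟨hi'2n, rest1, hSi', -, hGi'⟩ := pair_mem P comp _ j i' hji'L
  -- i is on the stack at time j
  have hiSj : i ∈ (greedy P comp j).1 := by
    refine stack_persist_back P comp j' ?_ (by omega) hij
    rw [hSj']; exact List.mem_cons_self
  -- j is on the stack at time j+1
  have hjS : j ∈ (greedy P comp (j+1)).1 := by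
    refine stack_persist_back P comp i' ?_ (by omega) (by omega)
    rw [hSi']; exact List.mem_cons_self
  -- analyze step j : must be a push, with head x
  rcases greedy_cases P comp j with ⟨h1, h2⟩ | ⟨x, rest0, h1, hc, h2⟩ | ⟨x, rest0, h1, hc, h2⟩
  · rw [h1] at hiSj; simp at hiSj
  · rw [h2] at hjS
    have : j ∈ (greedy P comp j).1 := by rw [h1]; exact List.mem_cons_of_mem _ hjS
    exact absurd (stack_lt P comp j j this) (lt_irrefl j)
  · -- push case: P j ≠ comp (P x)
    have hxj : x < j := stack_lt P comp j x (by rw [h1]; exact List.mem_cons_self)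
    by_cases hxi : x = i
    · exact hc (hxi ▸ hPji)
    · -- x > i since i ∈ S j and stack sorted
      have hix : i < x := by
        rw [h1] at hiSj
        rcases List.mem_cons.1 hiSj with rfl | h
        · exact absurd rfl hxi
        · have := stack_sorted P comp j
          rw [h1] at this
          exact (List.pairwise_cons.1 this).1 i h
      -- the suffix x :: rest0 of the stack at time j+1
      have hsuf : (x :: rest0) <:+ (greedy P comp (j+1)).1 := by
        rw [h2]; exact List.suffix_cons _ _
      rcases suffix_evolve P comp (show j+1 ≤ j' by omega) hsuf with hs | ⟨b, hb1, hb2, hb3⟩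
      · -- suffix survives to time j' : contradiction with sortedness
        rw [hSj'] at hs
        rcases List.suffix_cons_iff.1 hs with heq | hs'
        · have : x = i := by injection heq
          exact hxi this
        · have hx' : x ∈ rest2 := hs'.subset (List.mem_cons_self)
          have := stack_sorted P comp j'
          rw [hSj'] at this
          have := (List.pairwise_cons.1 this).1 x hx'
          omega
      · -- x matched at time b with j+1 ≤ b < j'
        obtain ⟨-, restb, hSb, -, -⟩ := pair_mem P comp _ x b hb3
        -- b must be > i'
        have hbi' : i' < b := by
          by_contra hle
          push_neg at hle
          have hjSb : j ∈ (greedy P comp b).1 := by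
            refine stack_persist_back P comp i' ?_ hle (by omega)
            rw [hSi']; exact List.mem_cons_self
          rw [hSb] at hjSb
          rcases List.mem_cons.1 hjSb with rfl | h
          · omega
          · have := stack_sorted P comp b
            rw [hSb] at this
            have := (List.pairwise_cons.1 this).1 j h
            omega
        -- (x,b) is an edge of the greedy matching violating adjacency
        have hxbL : (x, b) ∈ (greedy P comp (2*n)).2 :=
          pairs_mono P comp (by omega) hb3
        exact hadj ⟨(x, b), by simpa [greedyMatching] using hxbL, hix, hxj, hbi', hb2⟩
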